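/- arXiv:2208.12377 — 3 statements merged into one kernel-verified Lean document; each statement's English description precedes it below -/
import Mathlib

section
/- Let p(w) = Σ_{k=0}^n a_k w^{n-k} be a complex polynomial with a_0 ≠ 0. Then every root α of p satisfies |α| ≤ 2 · max{ |a_k/a_0|^{1/k} : k = 1, …, n }. -/
lemma geom_half_sum (n : ℕ) : ∑ i ∈ Finset.range n, (1/2:ℝ)^(i+1) = 1 - (1/2)^n := by
  induction n with
  | zero => simp
  | succ m ih => rw [Finset.sum_range_succ, ih]; ring

/-- Fujiwara's bound: every root α of p(w) = Σ_{k=0}^n a_k w^{n-k} with a_0 ≠ 0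
satisfies |α| ≤ 2 · max_{1 ≤ k ≤ n} |a_k/a_0|^{1/k}. -/
theorem fujiwara_bound (n : ℕ) (hn : 1 ≤ n) (a : ℕ → ℂ) (ha : a 0 ≠ 0) (α : ℂ)
    (hroot : ∑ k ∈ Finset.range (n + 1), a k * α ^ (n - k) = 0) :
    ‖α‖ ≤
      2 * (Finset.Icc 1 n).sup' (Finset.nonempty_Icc.mpr hn)
        (fun k => ‖a k / a 0‖ ^ ((1 : ℝ) / k)) := by
  by_contra hcon
  push_neg at hcon
  set M := (Finset.Icc 1 n).sup' (Finset.nonempty_Icc.mpr hn)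
      (fun k => ‖a k / a 0‖ ^ ((1 : ℝ) / k)) with hMdef
  have h1mem : (1:ℕ) ∈ Finset.Icc 1 n := Finset.mem_Icc.mpr ⟨le_refl 1, hn⟩
  have hM0 : 0 ≤ M :=
    le_trans (Real.rpow_nonneg (norm_nonneg _) _)
      (Finset.le_sup' (fun k => ‖a k / a 0‖ ^ ((1 : ℝ) / k)) h1mem)
  have hαpos : 0 < ‖α‖ := lt_of_le_of_lt (by linarith) hcon
  -- coefficient bound
  have key : ∀ k ∈ Finset.Icc 1 n, ‖a k / a 0‖ ≤ M ^ k := by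
    intro k hk
    obtain ⟨hk1, _⟩ := Finset.mem_Icc.mp hk
    have hkne : (k:ℝ) ≠ 0 := by positivity
    have hx : (0:ℝ) ≤ ‖a k / a 0‖ := norm_nonneg _
    have h1 : ‖a k / a 0‖ ^ ((1:ℝ)/k) ≤ M :=
      Finset.le_sup' (fun k => ‖a k / a 0‖ ^ ((1 : ℝ) / k)) hk
    have h2 := pow_le_pow_left₀ (Real.rpow_nonneg hx _) h1 k
    rwa [← Real.rpow_natCast (‖a k / a 0‖ ^ ((1:ℝ)/k)) k,
      ← Real.rpow_mul hx, one_div, inv_mul_cancel₀ hkne, Real.rpow_one] at h2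
  -- split the root equation
  have hsplit : a 0 * α ^ n = -∑ i ∈ Finset.range n, a (i+1) * α ^ (n - (i+1)) := by
    rw [Finset.sum_range_succ' (fun k => a k * α ^ (n - k)) n] at hroot
    simp only [Nat.sub_zero] at hroot
    linear_combination hroot
  have habs : ‖a 0‖ * ‖α‖ ^ n ≤
      ∑ i ∈ Finset.range n, ‖a (i+1)‖ * ‖α‖ ^ (n - (i+1)) := by
    calc ‖a 0‖ * ‖α‖ ^ n
        = ‖a 0 * α ^ n‖ := by rw [norm_mul, norm_pow]
      _ = ‖∑ i ∈ Finset.range n, a (i+1) * α ^ (n - (i+1))‖ := by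
          rw [hsplit, norm_neg]
      _ ≤ ∑ i ∈ Finset.range n, ‖a (i+1) * α ^ (n - (i+1))‖ :=
          norm_sum_le _ _
      _ = ∑ i ∈ Finset.range n, ‖a (i+1)‖ * ‖α‖ ^ (n - (i+1)) := by
          simp [norm_mul, norm_pow]
  have hhalf : M ≤ ‖α‖ / 2 := by linarith
  have hterm : ∀ i ∈ Finset.range n,
      ‖a (i+1)‖ * ‖α‖ ^ (n - (i+1)) ≤
        ‖a 0‖ * (1/2:ℝ)^(i+1) * ‖α‖ ^ n := by
    intro i hi
    have hi' : i + 1 ≤ n := Finset.mem_range.mp hi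
    have hmem : i + 1 ∈ Finset.Icc 1 n := Finset.mem_Icc.mpr ⟨Nat.le_add_left 1 i, hi'⟩
    have h1 : ‖a (i+1)‖ = ‖a 0‖ * ‖a (i+1) / a 0‖ := by
      rw [norm_div, mul_div_cancel₀]
      exact (norm_ne_zero_iff.mpr ha)
    have h2 : ‖a (i+1) / a 0‖ ≤ (‖α‖ / 2) ^ (i+1) :=
      le_trans (key _ hmem) (pow_le_pow_left₀ hM0 hhalf _)
    have h3 : (‖α‖ / 2) ^ (i+1) * ‖α‖ ^ (n - (i+1))
        = (1/2:ℝ)^(i+1) * ‖α‖ ^ n := by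
      rw [div_pow, div_eq_mul_inv, ← one_div, mul_comm (‖α‖ ^ (i+1)),
        mul_assoc, ← pow_add, Nat.add_sub_cancel' hi', one_div_pow]
    calc ‖a (i+1)‖ * ‖α‖ ^ (n - (i+1))
        = ‖a 0‖ * (‖a (i+1) / a 0‖ * ‖α‖ ^ (n - (i+1))) := by
          rw [h1]; ring
      _ ≤ ‖a 0‖ * ((‖α‖ / 2) ^ (i+1) * ‖α‖ ^ (n - (i+1))) := by
          apply mul_le_mul_of_nonneg_left _ (norm_nonneg _)
          exact mul_le_mul_of_nonneg_right h2 (by positivity)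
      _ = ‖a 0‖ * (1/2:ℝ)^(i+1) * ‖α‖ ^ n := by rw [h3]; ring
  have hsum : ∑ i ∈ Finset.range n, ‖a (i+1)‖ * ‖α‖ ^ (n - (i+1)) ≤
      ‖a 0‖ * ‖α‖ ^ n * (1 - (1/2:ℝ)^n) := by
    calc ∑ i ∈ Finset.range n, ‖a (i+1)‖ * ‖α‖ ^ (n - (i+1))
        ≤ ∑ i ∈ Finset.range n, ‖a 0‖ * (1/2:ℝ)^(i+1) * ‖α‖ ^ n :=
          Finset.sum_le_sum hterm
      _ = ‖a 0‖ * ‖α‖ ^ n * ∑ i ∈ Finset.range n, (1/2:ℝ)^(i+1) := by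
          rw [Finset.mul_sum]; exact Finset.sum_congr rfl fun i _ => by ring
      _ = ‖a 0‖ * ‖α‖ ^ n * (1 - (1/2:ℝ)^n) := by rw [geom_half_sum]
  have ha0pos : 0 < ‖a 0‖ := norm_pos_iff.mpr ha
  have hfin : ‖a 0‖ * ‖α‖ ^ n * (1 - (1/2:ℝ)^n) <
      ‖a 0‖ * ‖α‖ ^ n := by
    have h0 : (0:ℝ) < (1/2:ℝ)^n := by positivity
    have hX : 0 < ‖a 0‖ * ‖α‖ ^ n := by positivity
    nlinarith [mul_pos hX h0]
  linarith
end

section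
/- Let g be holomorphic on an open set U ⊆ ℂ containing the closed disk D(z_0, ρ) with ρ > 0, and write g(z) = g(z_0) + (z − z_0) g′(z_0) + (z − z_0)² R(z) for z ≠ z_0 in the open disk. If M̃ = max{ |g(z)| : |z − z_0| = ρ }, then |R(z)| ≤ M̃ / (ρ (ρ − |z − z_0|)) for all z with |z − z_0| < ρ. -/
open Metric Complex Set Filter Topology


/-- Cauchy-form bound on the first-order Taylor remainder of a holomorphic function:
R is the remainder of the first-order Taylor expansion of g at z₀ (extended
continuously/holomorphically at z₀) and M is the maximum of |g| on the circle of
radius ρ; then |R(z)| ≤ M/(ρ(ρ − |z − z₀|)) on the open disk. -/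
theorem taylor_remainder_bound (U : Set ℂ) (hU : IsOpen U) (g : ℂ → ℂ)
    (hg : DifferentiableOn ℂ g U) (z₀ : ℂ) (ρ : ℝ) (hρ : 0 < ρ)
    (hball : Metric.closedBall z₀ ρ ⊆ U)
    (R : ℂ → ℂ)
    (hRc : ContinuousOn R (Metric.ball z₀ ρ))
    (hR : ∀ z ∈ Metric.ball z₀ ρ, z ≠ z₀ →
      g z = g z₀ + (z - z₀) * deriv g z₀ + (z - z₀) ^ 2 * R z)
    (M : ℝ)
    (hM : IsGreatest {x : ℝ | ∃ z : ℂ, ‖z - z₀‖ = ρ ∧ x = ‖g z‖} M) :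
    ∀ z : ℂ, ‖z - z₀‖ < ρ →
      ‖R z‖ ≤ M / (ρ * (ρ - ‖z - z₀‖)) := by
  lift ρ to NNReal using hρ.le with ρ' hρ'
  have hρ0 : (0:ℝ) < ρ' := hρ
  have hρne : (ρ':ℝ) ≠ 0 := hρ0.ne'
  have hgd : DifferentiableOn ℂ g (closedBall z₀ ρ') := hg.mono hball
  have hps : HasFPowerSeriesOnBall g (cauchyPowerSeries g z₀ ρ') z₀ ρ' :=
    hgd.hasFPowerSeriesOnBall hρ
  set p := cauchyPowerSeries g z₀ ρ' with hp
  have hMg : ∀ θ : ℝ, ‖g (circleMap z₀ ρ' θ)‖ ≤ M := by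
    intro θ
    apply hM.2
    exact ⟨circleMap z₀ ρ' θ, by simp [circleMap, abs_of_pos hρ0], rfl⟩
  have hM0 : 0 ≤ M := (norm_nonneg _).trans (hMg 0)
  have hcoeff : ∀ n : ℕ, ‖p n‖ ≤ M / ρ' ^ n := by
    intro n
    refine (norm_cauchyPowerSeries_le g z₀ ρ' n).trans ?_
    have hcont : Continuous fun θ : ℝ => ‖g (circleMap z₀ ρ' θ)‖ := by
      have hco : ContinuousOn g (closedBall z₀ ρ') := hgd.continuousOn
      exact (hco.comp_continuous (continuous_circleMap _ _)
        (fun θ => circleMap_mem_closedBall _ hρ0.le θ)).norm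
    have hint : (∫ θ : ℝ in (0)..2 * Real.pi, ‖g (circleMap z₀ ρ' θ)‖) ≤ 2 * Real.pi * M := by
      calc (∫ θ : ℝ in (0)..2 * Real.pi, ‖g (circleMap z₀ ρ' θ)‖)
          ≤ ∫ _ : ℝ in (0)..2 * Real.pi, M := by
            apply intervalIntegral.integral_mono_on Real.two_pi_pos.le
              (hcont.intervalIntegrable _ _) (intervalIntegrable_const)
            exact fun θ _ => hMg θ
        _ = 2 * Real.pi * M := by simp [mul_comm]
    calc ((2 * Real.pi)⁻¹ * ∫ θ : ℝ in (0)..2 * Real.pi, ‖g (circleMap z₀ ρ' θ)‖) * |(ρ':ℝ)|⁻¹ ^ n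
        ≤ ((2 * Real.pi)⁻¹ * (2 * Real.pi * M)) * |(ρ':ℝ)|⁻¹ ^ n := by gcongr
      _ = M / ρ' ^ n := by
          rw [abs_of_pos hρ0, inv_mul_cancel_left₀ Real.two_pi_pos.ne', div_eq_mul_inv, inv_pow]
  -- the bound for w ≠ z₀
  have key : ∀ w : ℂ, w ∈ ball z₀ ρ' → w ≠ z₀ →
      ‖R w‖ ≤ M / (ρ' * (ρ' - ‖w - z₀‖)) := by
    intro w hw hwne
    set s : ℝ := ‖w - z₀‖ with hs
    have hs0 : 0 < s := by
      simpa [hs] using (norm_pos_iff.mpr (sub_ne_zero.2 hwne))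
    have hsρ : s < ρ' := by simpa [hs, mem_ball, dist_eq] using hw
    have hsne : (ρ':ℝ) - s ≠ 0 := sub_ne_zero.2 hsρ.ne'
    have hsum : HasSum (fun n : ℕ => p n fun _ => w - z₀) (g w) := by
      have hmem : (w - z₀) ∈ Metric.eball (0:ℂ) (ρ' : ENNReal) := by
        rw [Metric.emetric_ball_nnreal]
        simpa [mem_ball, dist_eq] using hsρ
      have := hps.hasSum hmem
      simpa [add_sub_cancel] using this
    have htail : HasSum (fun n : ℕ => p (n + 2) fun _ => w - z₀)
        (g w - ((p 0 fun _ => w - z₀) + (p 1 fun _ => w - z₀))) := by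
      have := (hasSum_nat_add_iff' (f := fun n : ℕ => p n fun _ => w - z₀) 2).2 hsum
      simpa [Finset.sum_range_succ] using this
    have h0 : (p 0 fun _ => w - z₀) = g z₀ := hps.coeff_zero _
    have h1 : (p 1 fun _ => w - z₀) = (w - z₀) * deriv g z₀ := by
      rw [FormalMultilinearSeries.apply_eq_pow_smul_coeff, hps.hasFPowerSeriesAt.deriv]
      simp [smul_eq_mul, mul_comm]
    have hval : g w - ((p 0 fun _ => w - z₀) + (p 1 fun _ => w - z₀)) = (w - z₀) ^ 2 * R w := by
      rw [h0, h1, hR w hw hwne]; ring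
    rw [hval] at htail
    have hgeo : HasSum (fun n : ℕ => M * (s / ρ') ^ 2 * (s / ρ') ^ n)
        (M * (s / ρ') ^ 2 * (1 - s / ρ')⁻¹) :=
      (hasSum_geometric_of_lt_one (by positivity) (by
        rw [div_lt_one hρ0]; exact hsρ)).mul_left _
    have hbound : ∀ n : ℕ, ‖(p (n + 2) fun _ => w - z₀)‖ ≤ M * (s / ρ') ^ 2 * (s / ρ') ^ n := by
      intro n
      calc ‖(p (n + 2) fun _ => w - z₀)‖
          ≤ ‖p (n + 2)‖ * ∏ _i : Fin (n + 2), ‖w - z₀‖ := (p (n + 2)).le_opNorm _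
        _ = ‖p (n + 2)‖ * s ^ (n + 2) := by simp [hs]
        _ ≤ M / ρ' ^ (n + 2) * s ^ (n + 2) := by gcongr; exact hcoeff _
        _ = M * (s / ρ') ^ 2 * (s / ρ') ^ n := by
            rw [div_pow, div_pow, pow_add]; field_simp; ring
    have hnorm : ‖(w - z₀) ^ 2 * R w‖ ≤ M * (s / ρ') ^ 2 * (1 - s / ρ')⁻¹ := by
      rw [← htail.tsum_eq]
      exact tsum_of_norm_bounded hgeo hbound
    have hlhs : ‖(w - z₀) ^ 2 * R w‖ = s ^ 2 * ‖R w‖ := by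
      simp [map_mul, map_pow, hs]
    rw [hlhs] at hnorm
    have hrhs : M * (s / ρ') ^ 2 * (1 - s / ρ')⁻¹ = s ^ 2 * (M / (ρ' * (ρ' - s))) := by
      have h1' : (1 : ℝ) - s / ρ' = (ρ' - s) / ρ' := by field_simp
      rw [h1']
      field_simp
    rw [hrhs] at hnorm
    exact le_of_mul_le_mul_left hnorm (pow_pos hs0 2)
  intro z hz
  by_cases hzz : z = z₀
  · subst hzz
    simp only [sub_self, norm_zero, sub_zero]
    set l := 𝓝[(ball z ρ' : Set ℂ) \ {z}] z with hl
    have hleq : l = 𝓝[≠] z := by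
      rw [hl, diff_eq, Set.inter_comm]
      exact nhdsWithin_inter_of_mem'
        (mem_nhdsWithin_of_mem_nhds (isOpen_ball.mem_nhds (mem_ball_self hρ0)))
    have hneb : l.NeBot := by rw [hleq]; infer_instance
    have ht1 : Tendsto (fun w => ‖R w‖) l (𝓝 ‖R z‖) := by
      have : Tendsto R l (𝓝 (R z)) :=
        (hRc z (mem_ball_self hρ0)).mono_left (nhdsWithin_mono _ diff_subset)
      exact (continuous_norm.continuousAt.tendsto).comp this
    have ht2 : Tendsto (fun w : ℂ => M / (↑ρ' * (↑ρ' - ‖w - z‖))) l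
        (𝓝 (M / (↑ρ' * ↑ρ'))) := by
      have hca : ContinuousAt (fun w : ℂ => M / (↑ρ' * (↑ρ' - ‖w - z‖))) z := by
        apply ContinuousAt.div continuousAt_const
        · exact (continuous_const.mul (continuous_const.sub
            (continuous_norm.comp (continuous_sub_right z)))).continuousAt
        · simp only [sub_self, norm_zero, sub_zero]
          positivity
      have := hca.tendsto
      simp only [sub_self, norm_zero, sub_zero] at this
      exact this.mono_left nhdsWithin_le_nhds
    refine le_of_tendsto_of_tendsto ht1 ht2 ?_
    filter_upwards [self_mem_nhdsWithin] with w hw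
    exact key w hw.1 hw.2
  · exact key z (by simpa [mem_ball, dist_eq] using hz) hzz
end

section
/- Let g be holomorphic on an open set containing the closed disk D(z_0, ρ) and let M̃ = max{|g(z)| : |z − z_0| = ρ}. Then for any 0 < δ < ρ and any z with |z − z_0| < δ, one has |g(z) − g(z_0)| ≤ δ |g′(z_0)| + δ² · M̃ / (ρ (ρ − δ)). -/
open Complex Metric
open scoped ENNReal NNReal

/-- Variation bound on a disk: if g is holomorphic on a neighbourhood of the closed
disk D(z₀, ρ) and M is the maximum of |g| on the boundary circle, then for 0 < δ < ρ
and |z − z₀| < δ one has |g(z) − g(z₀)| ≤ δ|g′(z₀)| + δ²·M/(ρ(ρ − δ)). -/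
theorem variation_bound (U : Set ℂ) (hU : IsOpen U) (g : ℂ → ℂ)
    (hg : DifferentiableOn ℂ g U) (z₀ : ℂ) (ρ : ℝ) (hρ : 0 < ρ)
    (hball : Metric.closedBall z₀ ρ ⊆ U)
    (M : ℝ)
    (hM : IsGreatest {x : ℝ | ∃ z : ℂ, ‖z - z₀‖ = ρ ∧ x = ‖g z‖} M)
    (δ : ℝ) (hδ0 : 0 < δ) (hδρ : δ < ρ) :
    ∀ z : ℂ, ‖z - z₀‖ < δ →
      ‖g z - g z₀‖ ≤
        δ * ‖deriv g z₀‖ + δ ^ 2 * (M / (ρ * (ρ - δ))) := by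
  intro z hz
  have hM0 : 0 ≤ M := by
    obtain ⟨w, -, hw⟩ := hM.1
    rw [hw]; positivity
  -- power series for g on the ball
  have hgd : DifferentiableOn ℂ g (closedBall z₀ ρ) := hg.mono hball
  have hρ' : 0 < ρ.toNNReal := by simpa using hρ
  have hp : HasFPowerSeriesOnBall g (cauchyPowerSeries g z₀ ρ.toNNReal) z₀ ρ.toNNReal := by
    refine DifferentiableOn.hasFPowerSeriesOnBall ?_ hρ'
    simpa [Real.coe_toNNReal _ hρ.le] using hgd
  set p := cauchyPowerSeries g z₀ ρ.toNNReal with hpdef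
  set y := z - z₀ with hy
  have hyδ : ‖y‖ ≤ δ := hz.le
  -- z is in the ball
  have hzball : z ∈ Metric.eball z₀ (ρ.toNNReal : ℝ≥0∞) := by
    rw [EMetric.mem_ball, edist_dist, Complex.dist_eq]
    have : ‖z - z₀‖ < ρ := hz.trans hδρ
    rw [ENNReal.ofReal_lt_coe_iff (by positivity)]
    simpa [Real.coe_toNNReal _ hρ.le] using this
  have hs : HasSum (fun n : ℕ => p n fun _ => y) (g z) := hp.hasSum_sub hzball
  -- coefficient bounds
  have hcont : ContinuousOn g (closedBall z₀ ρ) := hgd.continuousOn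
  have hcm : Continuous fun θ : ℝ => ‖g (circleMap z₀ ρ θ)‖ := by
    have : Continuous fun θ : ℝ => g (circleMap z₀ ρ θ) := by
      apply hcont.comp_continuous (continuous_circleMap _ _)
      intro θ
      simp [Complex.dist_eq, circleMap_sub_center, norm_circleMap_zero, abs_of_pos hρ, hρ.le]
    exact this.norm
  have hgle : ∀ θ : ℝ, ‖g (circleMap z₀ ρ θ)‖ ≤ M := by
    intro θ
    apply hM.2
    exact ⟨circleMap z₀ ρ θ, by simp [circleMap_sub_center, norm_circleMap_zero, abs_of_pos hρ], rfl⟩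
  have hint : (2 * Real.pi)⁻¹ * ∫ θ : ℝ in (0)..2 * Real.pi,
      ‖g (circleMap z₀ ρ θ)‖ ≤ M := by
    have h1 : ∫ θ : ℝ in (0)..2 * Real.pi, ‖g (circleMap z₀ ρ θ)‖ ≤
        ∫ _ : ℝ in (0)..2 * Real.pi, M := by
      apply intervalIntegral.integral_mono_on Real.two_pi_pos.le
        (hcm.intervalIntegrable _ _) (intervalIntegrable_const)
      intro θ _; exact hgle θ
    rw [intervalIntegral.integral_const, smul_eq_mul, sub_zero] at h1
    calc (2 * Real.pi)⁻¹ * ∫ θ : ℝ in (0)..2 * Real.pi, ‖g (circleMap z₀ ρ θ)‖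
        ≤ (2 * Real.pi)⁻¹ * (2 * Real.pi * M) := by
          apply mul_le_mul_of_nonneg_left h1 (by positivity)
      _ = M := by field_simp
  have hpn : ∀ n : ℕ, ‖p n‖ ≤ M * (ρ⁻¹) ^ n := by
    intro n
    have hcoe : ((ρ.toNNReal : ℝ)) = ρ := Real.coe_toNNReal _ hρ.le
    refine (norm_cauchyPowerSeries_le g z₀ _ n).trans ?_
    rw [hcoe, abs_of_pos hρ]
    exact mul_le_mul_of_nonneg_right hint (by positivity)
  have hterm : ∀ n : ℕ, ‖p n fun _ => y‖ ≤ M * (δ / ρ) ^ n := by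
    intro n
    calc ‖p n fun _ => y‖ ≤ ‖p n‖ * ∏ _i : Fin n, ‖y‖ := (p n).le_opNorm _
      _ = ‖p n‖ * ‖y‖ ^ n := by rw [Finset.prod_const]; simp
      _ ≤ (M * ρ⁻¹ ^ n) * δ ^ n := by
          apply mul_le_mul (hpn n) (pow_le_pow_left₀ (norm_nonneg _) hyδ n)
            (by positivity) (by positivity)
      _ = M * (δ / ρ) ^ n := by rw [div_pow]; ring
  -- tail sum
  have hs2 : HasSum (fun n : ℕ => p (n + 2) fun _ => y)
      (g z - ((p 0 fun _ => y) + (p 1 fun _ => y))) := by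
    have h2 := (hasSum_nat_add_iff' (f := fun n : ℕ => p n fun _ => y) 2).mpr hs
    have he : ∑ i ∈ Finset.range 2, (p i fun _ => y) = (p 0 fun _ => y) + (p 1 fun _ => y) := by
      simp [Finset.sum_range_succ]
    rwa [he] at h2
  have hratio : δ / ρ < 1 := (div_lt_one hρ).2 hδρ
  have hratio0 : 0 ≤ δ / ρ := by positivity
  have hgeom : HasSum (fun n : ℕ => M * (δ / ρ) ^ (n + 2))
      (M * (δ / ρ) ^ 2 * (1 - δ / ρ)⁻¹) := by
    have h := hasSum_geometric_of_lt_one hratio0 hratio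
    have := (h.mul_left (M * (δ / ρ) ^ 2))
    convert this using 2 with n
    · rfl
    · ring
  have htail : ‖g z - ((p 0 fun _ => y) + (p 1 fun _ => y))‖ ≤
      M * (δ / ρ) ^ 2 * (1 - δ / ρ)⁻¹ := by
    refine hs2.norm_le_of_bounded hgeom fun n => hterm (n + 2)
  -- identify the first coefficients
  have h0 : (p 0 fun _ => y) = g z₀ := hp.coeff_zero _
  have h1 : (p 1 fun _ => y) = y • p.coeff 1 := by
    rw [FormalMultilinearSeries.apply_eq_pow_smul_coeff, pow_one]
  have hderiv : deriv g z₀ = p.coeff 1 := hp.hasFPowerSeriesAt.deriv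
  -- put it together
  have key : ‖g z - g z₀‖ ≤
      ‖y‖ * ‖deriv g z₀‖ + M * (δ / ρ) ^ 2 * (1 - δ / ρ)⁻¹ := by
    have : g z - g z₀ = (y • p.coeff 1) + (g z - ((p 0 fun _ => y) + (p 1 fun _ => y))) := by
      rw [h0, h1]; ring
    rw [this]
    refine (norm_add_le _ _).trans ?_
    gcongr
    · rw [smul_eq_mul, norm_mul, hderiv]
  refine key.trans ?_
  have heq : M * (δ / ρ) ^ 2 * (1 - δ / ρ)⁻¹ = δ ^ 2 * (M / (ρ * (ρ - δ))) := by
    have hρδ : ρ - δ > 0 := by linarith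
    field_simp
  rw [heq]
  gcongr
end
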